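/- Let (a_j)_{j≥1} be a sequence of nonnegative real numbers and c > 0 a constant such that c · Σ_{j=k+1}^∞ a_j ≤ a_k for all k ≥ 1 (in particular all the tail series converge). Then a_j ≤ c⁻¹ (1 + c)^{2−j} a₁ for every j ≥ 2. -/

import Mathlib

set_option autoImplicit false

/-- If a nonnegative sequence `(a_j)_{j≥1}` satisfies `c · Σ_{j=k+1}^∞ a_j ≤ a_k` for all
`k ≥ 1` (with all tail series convergent), then `a_j ≤ c⁻¹ (1+c)^{2−j} a_1` for all `j ≥ 2`. -/
theorem stmt_2
    (a : ℕ → ℝ) (c : ℝ) (hc : 0 < c)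
    (hnonneg : ∀ j : ℕ, 1 ≤ j → 0 ≤ a j)
    (hsum : ∀ k : ℕ, 1 ≤ k → Summable (fun j : ℕ => a (k + 1 + j)))
    (hbound : ∀ k : ℕ, 1 ≤ k → c * ∑' j : ℕ, a (k + 1 + j) ≤ a k) :
    ∀ j : ℕ, 2 ≤ j → a j ≤ c⁻¹ * (1 + c) ^ ((2 : ℤ) - (j : ℤ)) * a 1 := by
  set T : ℕ → ℝ := fun k => ∑' j : ℕ, a (k + 1 + j) with hT
  have h1c : (0 : ℝ) < 1 + c := by linarith
  have hTnonneg : ∀ k : ℕ, 0 ≤ T k := by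
    intro k
    exact tsum_nonneg fun j => hnonneg _ (by omega)
  have hstep : ∀ k : ℕ, 1 ≤ k → T k = a (k + 1) + T (k + 1) := by
    intro k hk
    have hs := hsum k hk
    have := Summable.tsum_eq_zero_add hs
    simp only [hT]
    rw [this]
    congr 1
    exact tsum_congr fun j => by congr 1; omega
  have hclaim : ∀ n : ℕ, T (n + 1) ≤ c⁻¹ * (1 + c) ^ (-(n : ℤ)) * a 1 := by
    intro n
    induction n with
    | zero =>
      simp only [Nat.cast_zero, neg_zero, zpow_zero, mul_one]
      have := hbound 1 le_rfl
      rw [inv_mul_eq_div, le_div_iff₀ hc, mul_comm]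
      exact this
    | succ n ih =>
      have h1 : c * T (n + 2) ≤ a (n + 2) := hbound (n + 2) (by omega)
      have h2 : T (n + 1) = a (n + 2) + T (n + 2) := hstep (n + 1) (by omega)
      have h3 : (1 + c) * T (n + 2) ≤ T (n + 1) := by
        rw [h2]; nlinarith [hTnonneg (n + 2)]
      have h4 : T (n + 2) ≤ T (n + 1) / (1 + c) := by
        rw [le_div_iff₀ h1c]; linarith
      have hcast : (-((n:ℕ)+1 : ℕ) : ℤ) = -((n : ℤ) + 1) := by push_cast; ring
      rw [show n + 1 + 1 = n + 2 from rfl, hcast]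
      calc T (n + 2) ≤ T (n + 1) / (1 + c) := h4
        _ ≤ (c⁻¹ * (1 + c) ^ (-(n : ℤ)) * a 1) / (1 + c) := by
            gcongr
        _ = c⁻¹ * (1 + c) ^ (-((n : ℤ) + 1)) * a 1 := by
            rw [neg_add, zpow_add₀ (ne_of_gt h1c), zpow_neg_one]
            field_simp
  intro j hj
  obtain ⟨m, rfl⟩ : ∃ m, j = m + 2 := ⟨j - 2, by omega⟩
  have haT : a (m + 2) ≤ T (m + 1) := by
    have := Summable.le_tsum (hsum (m + 1) (by omega)) 0 (fun j _ => hnonneg _ (by omega))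
    simpa using this
  have := hclaim m
  have heq : ((2 : ℤ) - ((m : ℕ) + 2 : ℕ)) = -(m : ℤ) := by push_cast; ring
  rw [heq]
  linarith
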